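/- If v_a = h/f where f, h are nowhere-zero functions on the lattice satisfying the bilinear equations (p−a)f̃ĥ − (q−a)f̂h̃ − (p−q)f·ĥ̃ = 0 and (p+a)f̂h̃ − (q+a)f̃ĥ − (p−q)f̂̃h = 0, then v_a satisfies the lpmKdV equation v_a((p−a)v̂_a − (q−a)ṽ_a) = v̂̃_a((p+a)ṽ_a − (q+a)v̂_a). -/

import Mathlib

/-- If `v_a = h/f` with `f, h` nowhere zero satisfying the two bilinear equations
`(p−a)f̃ĥ − (q−a)f̂h̃ − (p−q)f·ĥ̃ = 0` and `(p+a)f̂h̃ − (q+a)f̃ĥ − (p−q)f̂̃h = 0`,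
then `v_a` satisfies the lpmKdV equation. -/
theorem stmt_15 (p q a : ℝ)
    (f h : ℤ → ℤ → ℝ)
    (hf : ∀ n m : ℤ, f n m ≠ 0) (hh : ∀ n m : ℤ, h n m ≠ 0)
    (v : ℤ → ℤ → ℝ) (hv : ∀ n m : ℤ, v n m = h n m / f n m)
    (H21 : ∀ n m : ℤ, (p - a) * f (n+1) m * h n (m+1)
      - (q - a) * f n (m+1) * h (n+1) m - (p - q) * f n m * h (n+1) (m+1) = 0)
    (H22 : ∀ n m : ℤ, (p + a) * f n (m+1) * h (n+1) m
      - (q + a) * f (n+1) m * h n (m+1) - (p - q) * f (n+1) (m+1) * h n m = 0)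
    (n m : ℤ) :
    v n m * ((p - a) * v n (m+1) - (q - a) * v (n+1) m)
      = v (n+1) (m+1) * ((p + a) * v (n+1) m - (q + a) * v n (m+1)) := by
  have h1 := H21 n m
  have h2 := H22 n m
  rw [hv, hv, hv, hv]
  have e1 : (p - a) * (h n (m+1) / f n (m+1)) - (q - a) * (h (n+1) m / f (n+1) m)
      = ((p - a) * h n (m+1) * f (n+1) m - (q - a) * h (n+1) m * f n (m+1))
        / (f n (m+1) * f (n+1) m) := by
    field_simp [hf n (m+1), hf (n+1) m]
  have e2 : (p + a) * (h (n+1) m / f (n+1) m) - (q + a) * (h n (m+1) / f n (m+1))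
      = ((p + a) * h (n+1) m * f n (m+1) - (q + a) * h n (m+1) * f (n+1) m)
        / (f (n+1) m * f n (m+1)) := by
    field_simp [hf n (m+1), hf (n+1) m]
  rw [e1, e2, div_mul_div_comm, div_mul_div_comm,
    div_eq_div_iff (mul_ne_zero (hf n m) (mul_ne_zero (hf n (m+1)) (hf (n+1) m)))
      (mul_ne_zero (hf (n+1) (m+1)) (mul_ne_zero (hf (n+1) m) (hf n (m+1))))]
  linear_combination (f n (m+1) * f (n+1) m) *
    ((h n m * f (n+1) (m+1)) * h1 - (f n m * h (n+1) (m+1)) * h2)
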